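/- arXiv:1903.09619 — 2 statements merged into one kernel-verified Lean document; each statement's English description precedes it below -/
import Mathlib

section
/- For every k ≥ 1, every natural number n with H(n) = k and n < 2^k is odd. -/
/-- The height function: H(1) = 0 and H(n) = H(φ(n)) + 1 for n ≥ 2. -/
def H : ℕ → ℕ
  | 0 => 0
  | 1 => 0
  | n + 2 => H (Nat.totient (n + 2)) + 1
  decreasing_by exact Nat.totient_lt _ (by omega)

/-- The sum-of-heights function S(n) = ∑_{k=1}^n H(k). -/
def S (n : ℕ) : ℕ := ∑ k ∈ Finset.Icc 1 n, H k

lemma H_eq {n : ℕ} (h : 2 ≤ n) : H n = H (Nat.totient n) + 1 := by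
  obtain ⟨m, rfl⟩ : ∃ m, n = m + 2 := ⟨n - 2, by omega⟩
  rw [H]

lemma two_mul_totient_le {n : ℕ} (hn : Even n) (h2 : 2 ≤ n) :
    2 * Nat.totient n ≤ n := by
  obtain ⟨m, rfl⟩ := hn
  rw [Nat.totient_eq_card_coprime]
  have hcard : (Finset.filter (fun a => (m + m).Coprime a) (Finset.range (m + m))).card ≤ m := by
    have := Finset.card_le_card_of_injOn (fun a => a / 2)
      (s := Finset.filter (fun a => (m + m).Coprime a) (Finset.range (m + m)))
      (t := Finset.range m) ?_ ?_
    · simpa using this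
    · intro a ha
      simp only [Finset.mem_coe, Finset.mem_filter, Finset.mem_range] at ha ⊢
      have hodd : ¬ 2 ∣ a := by
        intro hdvd
        have : 2 ∣ Nat.gcd (m + m) a := Nat.dvd_gcd (by omega) hdvd
        rw [ha.2] at this; omega
      omega
    · intro a ha b hb hab
      simp only [Finset.mem_coe, Finset.mem_filter, Finset.mem_range] at ha hb
      have hoa : ¬ 2 ∣ a := fun hdvd => by
        have : 2 ∣ Nat.gcd (m + m) a := Nat.dvd_gcd (by omega) hdvd
        rw [ha.2] at this; omega
      have hob : ¬ 2 ∣ b := fun hdvd => by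
        have : 2 ∣ Nat.gcd (m + m) b := Nat.dvd_gcd (by omega) hdvd
        rw [hb.2] at this; omega
      simp only at hab
      omega
  omega

lemma pow_H_le {n : ℕ} (hn : Even n) (h2 : 2 ≤ n) : 2 ^ H n ≤ n := by
  induction n using Nat.strong_induction_on with
  | _ n ih =>
    rcases eq_or_lt_of_le h2 with h | h
    · subst h
      have h1 : H 2 = 1 := by rw [H_eq le_rfl, Nat.totient_two, H]
      rw [h1]; norm_num
    · -- n > 2
      have hφeven : Even (Nat.totient n) := Nat.totient_even h
      have hφpos : 0 < Nat.totient n := Nat.totient_pos.mpr (by omega)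
      have hφ2 : 2 ≤ Nat.totient n := by
        rcases hφeven with ⟨t, ht⟩; omega
      have hlt : Nat.totient n < n := Nat.totient_lt n (by omega)
      have := ih _ hlt hφeven hφ2
      rw [H_eq h2, pow_succ]
      calc 2 ^ H (Nat.totient n) * 2 ≤ Nat.totient n * 2 :=
            Nat.mul_le_mul_right 2 this
        _ ≤ n := by have := two_mul_totient_le hn h2; omega

theorem odd_of_lt_pow_at_height (k n : ℕ) (hk : 1 ≤ k) (hH : H n = k)
    (hlt : n < 2 ^ k) : Odd n := by
  rw [← Nat.not_even_iff_odd]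
  intro he
  have h2 : 2 ≤ n := by
    rcases he with ⟨m, rfl⟩
    rcases Nat.eq_zero_or_pos m with rfl | h
    · simp [H] at hH; omega
    · omega
  have := pow_H_le he h2
  rw [hH] at this
  omega
end

section
/- Let k > 2 and let m be an odd composite natural number (m > 1 and m not prime) that is not divisible by 3, with H(m) = k. Then m < 2·3^{k−2} + 1. -/
lemma H_one : H 1 = 0 := by simp [H]

lemma H_step {n : ℕ} (hn : 2 ≤ n) : H n = H n.totient + 1 := by
  obtain ⟨m, rfl⟩ : ∃ m, n = m + 2 := ⟨n - 2, by omega⟩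
  simp [H]

lemma H_pos {n : ℕ} (hn : 2 ≤ n) : 1 ≤ H n := by rw [H_step hn]; omega

lemma totient_two_le {n : ℕ} (hn : 3 ≤ n) : 2 ≤ n.totient := by
  obtain ⟨r, hr⟩ := Nat.totient_even (by omega : 2 < n)
  have := Nat.totient_pos.mpr (by omega : 0 < n)
  omega

lemma H_two_le {n : ℕ} (hn : 3 ≤ n) : 2 ≤ H n := by
  rw [H_step (by omega)]
  have := H_pos (totient_two_le hn); omega

/-- weight of a prime -/
def wt (p : ℕ) : ℕ := if p = 2 then 1 else H (p - 1)

/-- the completely additive class function -/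
def g (n : ℕ) : ℕ := n.factorization.sum fun p e => e * wt p

lemma g_def' (n : ℕ) : g n = ∑ p ∈ n.primeFactors, n.factorization p * wt p := rfl

lemma g_one : g 1 = 0 := by simp [g]

lemma g_mul {a b : ℕ} (ha : a ≠ 0) (hb : b ≠ 0) : g (a * b) = g a + g b := by
  unfold g
  rw [Nat.factorization_mul ha hb]
  exact Finsupp.sum_add_index' (fun p => by simp) (fun p e1 e2 => by ring)

lemma g_prime {p : ℕ} (hp : p.Prime) : g p = wt p := by
  unfold g
  rw [hp.factorization, Finsupp.sum_single_index (by simp)]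
  ring

lemma g_pow {p : ℕ} (hp : p.Prime) (k : ℕ) : g (p ^ k) = k * wt p := by
  unfold g
  rw [Nat.Prime.factorization_pow hp, Finsupp.sum_single_index (by simp)]

lemma g_prod {ι : Type*} (s : Finset ι) (f : ι → ℕ) (hf : ∀ i ∈ s, f i ≠ 0) :
    g (∏ i ∈ s, f i) = ∑ i ∈ s, g (f i) := by
  induction s using Finset.cons_induction with
  | empty => simp [g_one]
  | cons i s hi ih =>
      rw [Finset.prod_cons, Finset.sum_cons,
        g_mul (hf i (Finset.mem_cons_self i s)) (Finset.prod_ne_zero_iff.2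
          (fun j hj => hf j (Finset.mem_cons_of_mem hj))),
        ih (fun j hj => hf j (Finset.mem_cons_of_mem hj))]

/-- Shapiro's theorem on the class of n -/
lemma shapiro : ∀ n : ℕ, 2 ≤ n → (Even n → H n = g n) ∧ (¬ Even n → H n = g n + 1) := by
  intro n
  induction n using Nat.strong_induction_on with
  | _ n IH =>
    intro hn
    rcases eq_or_lt_of_le hn with h2 | h3
    · -- n = 2
      subst h2
      constructor
      · intro _
        rw [H_step le_rfl, Nat.totient_two, H_one, g_prime Nat.prime_two]
        simp [wt]
      · intro h; exact absurd (even_two) h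
    · -- n ≥ 3
      have hn0 : n ≠ 0 := by omega
      -- compute g of totient
      have hφ : n.totient = ∏ p ∈ n.primeFactors, p ^ (n.factorization p - 1) * (p - 1) := by
        rw [Nat.totient_eq_prod_factorization hn0]; rfl
      have hterm : ∀ p ∈ n.primeFactors,
          g (p ^ (n.factorization p - 1) * (p - 1)) =
            (n.factorization p - 1) * wt p + g (p - 1) := by
        intro p hp
        have hpp := Nat.prime_of_mem_primeFactors hp
        have hp1 : p - 1 ≠ 0 := by have := hpp.two_le; omega
        rw [g_mul (pow_ne_zero _ hpp.pos.ne') hp1, g_pow hpp]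
      have hodd_term : ∀ p ∈ n.primeFactors, p ≠ 2 →
          g (p ^ (n.factorization p - 1) * (p - 1)) = n.factorization p * wt p := by
        intro p hp hp2
        have hpp := Nat.prime_of_mem_primeFactors hp
        have hp3 : 3 ≤ p := (Nat.two_le_iff p).mp hpp.two_le |>.1 |> fun _ => by
          rcases hpp.two_le.lt_or_eq with h | h
          · omega
          · exact absurd h.symm hp2
        have hplt : p - 1 < n := by
          have := Nat.le_of_mem_primeFactors hp; omega
        have hpe : Even (p - 1) := by
          have : ¬ Even p := by
            intro he
            rcases (Nat.Prime.even_iff hpp).mp he with h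
            exact hp2 h
          rcases Nat.even_or_odd p with h | h
          · exact absurd h this
          · rcases h with ⟨r, hr⟩; exact ⟨r, by omega⟩
        have hg1 : H (p - 1) = g (p - 1) := (IH _ hplt (by omega)).1 hpe
        have hfp : 1 ≤ n.factorization p := (Nat.Prime.factorization_pos_of_dvd hpp hn0
          (Nat.dvd_of_mem_primeFactors hp))
        rw [hterm p hp, ← hg1]
        have : wt p = H (p - 1) := by simp [wt, hp2]
        rw [← this]
        cases' Nat.exists_eq_add_of_le hfp with e he
        rw [he, show 1 + e - 1 = e from by omega]; ring
      have hφ2 : 2 ≤ n.totient := totient_two_le h3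
      have hφeven : Even n.totient := Nat.totient_even h3
      have hφlt : n.totient < n := Nat.totient_lt _ (by omega)
      have hHφ : H n.totient = g n.totient := (IH _ hφlt hφ2).1 hφeven
      have hgφ : g n.totient = ∑ p ∈ n.primeFactors,
          g (p ^ (n.factorization p - 1) * (p - 1)) := by
        rw [hφ]
        exact g_prod _ _ (fun p hp => by
          have hpp := Nat.prime_of_mem_primeFactors hp
          have := hpp.two_le
          exact Nat.mul_ne_zero (pow_ne_zero _ (by omega)) (by omega))
      constructor
      · -- n even
        intro hne
        have h2mem : 2 ∈ n.primeFactors := by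
          rw [Nat.mem_primeFactors]
          exact ⟨Nat.prime_two, hne.two_dvd, hn0⟩
        have hf2 : 1 ≤ n.factorization 2 :=
          Nat.Prime.factorization_pos_of_dvd Nat.prime_two hn0 hne.two_dvd
        have hsplit : g n.totient = (n.factorization 2 - 1) +
            ∑ p ∈ n.primeFactors.erase 2, n.factorization p * wt p := by
          rw [hgφ, ← Finset.add_sum_erase _ _ h2mem]
          congr 1
          · rw [hterm 2 h2mem]
            norm_num [wt, g_one]
          · exact Finset.sum_congr rfl (fun p hp =>
              hodd_term p (Finset.mem_of_mem_erase hp) (Finset.ne_of_mem_erase hp))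
        have hsplit2 : g n = n.factorization 2 +
            ∑ p ∈ n.primeFactors.erase 2, n.factorization p * wt p := by
          rw [g_def', ← Finset.add_sum_erase _ _ h2mem]
          congr 1
          simp [wt]
        rw [H_step hn, hHφ]
        omega
      · -- n odd
        intro hno
        have hall : ∀ p ∈ n.primeFactors, p ≠ 2 := by
          intro p hp hp2
          subst hp2
          exact hno (even_iff_two_dvd.mpr (Nat.dvd_of_mem_primeFactors hp))
        have : g n.totient = g n := by
          rw [hgφ, g_def']
          exact Finset.sum_congr rfl (fun p hp => hodd_term p hp (hall p hp))
        rw [H_step hn, hHφ, this]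

lemma H_even_eq_g {n : ℕ} (h2 : 2 ≤ n) (he : Even n) : H n = g n :=
  (shapiro n h2).1 he

lemma H_odd_eq_g {n : ℕ} (h2 : 2 ≤ n) (ho : ¬ Even n) : H n = g n + 1 :=
  (shapiro n h2).2 ho

lemma g_even_pos {n : ℕ} (h2 : 2 ≤ n) (he : Even n) : 1 ≤ g n := by
  rw [← H_even_eq_g h2 he]; exact H_pos h2

/-- size bounds -/
lemma size_bound : ∀ n : ℕ, 1 ≤ n →
    (¬ Even n → n ≤ 3 ^ g n) ∧ (Even n → n ≤ 2 * 3 ^ (g n - 1)) := by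
  intro n
  induction n using Nat.strong_induction_on with
  | _ n IH =>
    intro hn
    rcases eq_or_lt_of_le hn with h1 | h2
    · subst h1
      constructor
      · intro _; simp [g_one]
      · intro h; simp at h
    · -- n ≥ 2
      by_cases hne : Even n
      · refine ⟨fun h => absurd hne h, fun _ => ?_⟩
        obtain ⟨m, hm⟩ := hne
        have hm' : n = 2 * m := by omega
        have hm1 : 1 ≤ m := by omega
        have hmlt : m < n := by omega
        have hg : g n = 1 + g m := by
          rw [hm', g_mul two_ne_zero (by omega), g_prime Nat.prime_two]
          simp [wt]
        by_cases hme : Even m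
        · have hb := (IH m hmlt hm1).2 hme
          have hgm : 1 ≤ g m := g_even_pos (by obtain ⟨t, ht⟩ := hme; omega) hme
          have h3 : (3:ℕ) ^ g m = 3 * 3 ^ (g m - 1) := by
            conv_lhs => rw [show g m = 1 + (g m - 1) by omega]
            rw [pow_add]; ring
          have hgg : g n - 1 = g m := by omega
          have h1 : (1:ℕ) ≤ 3 ^ (g m - 1) := Nat.one_le_pow _ _ (by norm_num)
          rw [hgg, hm', h3]
          omega
        · have hb := (IH m hmlt hm1).1 hme
          have hgg : g n - 1 = g m := by omega
          rw [hgg, hm']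
          omega
      · refine ⟨fun _ => ?_, fun h => absurd h hne⟩
        set p := n.minFac with hp
        have hpp : p.Prime := Nat.minFac_prime (by omega)
        have hpd : p ∣ n := Nat.minFac_dvd n
        have hp2 : p ≠ 2 := by
          intro h
          exact hne (even_iff_two_dvd.mpr (h ▸ hpd))
        by_cases hnp : n = p
        · -- n is prime
          have hp3 : 3 ≤ p := by
            rcases hpp.two_le.lt_or_eq with h | h
            · omega
            · exact absurd h.symm hp2
          have hpe : Even (p - 1) := by
            rcases Nat.even_or_odd p with h | h
            · exact absurd (hnp ▸ h) hne
            · rcases h with ⟨r, hr⟩; exact ⟨r, by omega⟩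
          have hplt : p - 1 < n := by omega
          have hb := (IH (p - 1) hplt (by omega)).2 hpe
          have hgp : g p = g (p - 1) := by
            rw [g_prime hpp]
            have : wt p = H (p - 1) := by simp [wt, hp2]
            rw [this, H_even_eq_g (by omega) hpe]
          have hg1 : 1 ≤ g (p - 1) := g_even_pos (by omega) hpe
          have h3 : (3:ℕ) ^ g (p - 1) = 3 * 3 ^ (g (p - 1) - 1) := by
            conv_lhs => rw [show g (p - 1) = 1 + (g (p - 1) - 1) by omega]
            rw [pow_add]; ring
          rw [hnp, hgp, h3]
          have h1 : (1:ℕ) ≤ 3 ^ (g (p - 1) - 1) := Nat.one_le_pow _ _ (by norm_num)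
          omega
        · -- n is composite
          obtain ⟨m, hm⟩ := hpd
          have hple : p ≤ n := Nat.minFac_le (by omega)
          have hm1 : 1 < m := by
            rcases Nat.lt_or_ge 1 m with h | h
            · exact h
            · interval_cases m
              · omega
              · simp at hm; omega
          have hmlt : m < n := by
            have := hpp.two_le; nlinarith [hm]
          have hplt : p < n := by
            rcases eq_or_lt_of_le hple with h | h
            · exact absurd h.symm hnp
            · exact h
          have hmo : ¬ Even m := by
            intro he
            exact hne (hm ▸ (he.mul_left p))
          have hpo : ¬ Even p := by
            intro he
            exact hne (hm ▸ (he.mul_right m))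
          have hb1 := (IH p hplt (by have := hpp.two_le; omega)).1 hpo
          have hb2 := (IH m hmlt (by omega)).1 hmo
          rw [hm, g_mul hpp.pos.ne' (by omega), pow_add]
          exact Nat.mul_le_mul hb1 hb2

lemma prime_bound {p : ℕ} (hp : p.Prime) (h2 : p ≠ 2) : p ≤ 2 * 3 ^ (g p - 1) + 1 := by
  have hp3 : 3 ≤ p := by
    rcases hp.two_le.lt_or_eq with h | h
    · omega
    · exact absurd h.symm h2
  have hpe : Even (p - 1) := by
    rcases Nat.even_or_odd p with h | h
    · exact absurd ((Nat.Prime.even_iff hp).mp h) h2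
    · rcases h with ⟨r, hr⟩; exact ⟨r, by omega⟩
  have hb := (size_bound (p - 1) (by omega)).2 hpe
  have hgp : g p = g (p - 1) := by
    rw [g_prime hp]
    have : wt p = H (p - 1) := by simp [wt, h2]
    rw [this, H_even_eq_g (by omega) hpe]
  rw [hgp]
  omega

lemma g_prime_two_le {p : ℕ} (hp : p.Prime) (h2 : p ≠ 2) (h3 : p ≠ 3) : 2 ≤ g p := by
  have hp5 : 5 ≤ p := by
    have h4 : p ≠ 4 := by intro h; rw [h] at hp; norm_num at hp
    have := hp.two_le
    omega
  rw [g_prime hp]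
  have : wt p = H (p - 1) := by simp [wt, h2]
  rw [this]
  exact H_two_le (by omega)

lemma odd_coprime3_bound : ∀ r : ℕ, 1 < r → ¬ Even r → ¬ 3 ∣ r →
    2 ≤ g r ∧ r ≤ 2 * 3 ^ (g r - 1) + 1 := by
  intro r
  induction r using Nat.strong_induction_on with
  | _ r IH =>
    intro hr hro h3r
    set p := r.minFac with hp
    have hpp : p.Prime := Nat.minFac_prime (by omega)
    have hpd : p ∣ r := Nat.minFac_dvd r
    have hp2 : p ≠ 2 := fun h => hro (even_iff_two_dvd.mpr (h ▸ hpd))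
    have hp3 : p ≠ 3 := fun h => h3r (h ▸ hpd)
    have hgp : 2 ≤ g p := g_prime_two_le hpp hp2 hp3
    have hbp : p ≤ 2 * 3 ^ (g p - 1) + 1 := prime_bound hpp hp2
    by_cases hrp : r = p
    · exact ⟨hrp ▸ hgp, hrp ▸ hbp⟩
    · obtain ⟨m, hm⟩ := hpd
      have hple : p ≤ r := Nat.minFac_le (by omega)
      have hm1 : 1 < m := by
        rcases Nat.lt_or_ge 1 m with h | h
        · exact h
        · interval_cases m
          · omega
          · simp at hm; omega
      have hmlt : m < r := by
        have := hpp.two_le; nlinarith [hm]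
      have hmo : ¬ Even m := fun he => hro (hm ▸ (he.mul_left p))
      have h3m : ¬ 3 ∣ m := fun hd => h3r (hm ▸ (hd.mul_left p))
      obtain ⟨hgm, hbm⟩ := IH m hmlt hm1 hmo h3m
      have hgr : g r = g p + g m := hm ▸ g_mul hpp.pos.ne' (by omega)
      refine ⟨by omega, ?_⟩
      set a := g p
      set b := g m
      have hx : (3:ℕ) ≤ 3 ^ (a - 1) := by
        calc (3:ℕ) = 3 ^ 1 := by norm_num
        _ ≤ 3 ^ (a - 1) := Nat.pow_le_pow_right (by norm_num) (by omega)
      have hy : (3:ℕ) ≤ 3 ^ (b - 1) := by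
        calc (3:ℕ) = 3 ^ 1 := by norm_num
        _ ≤ 3 ^ (b - 1) := Nat.pow_le_pow_right (by norm_num) (by omega)
      have hpow : (3:ℕ) ^ (g r - 1) = 3 * (3 ^ (a - 1) * 3 ^ (b - 1)) := by
        rw [← pow_add, ← pow_succ']
        congr 1
        omega
      rw [hgr] at hpow ⊢
      rw [hpow]
      calc r = p * m := hm
        _ ≤ (2 * 3 ^ (a - 1) + 1) * (2 * 3 ^ (b - 1) + 1) := Nat.mul_le_mul hbp hbm
        _ ≤ 2 * (3 * (3 ^ (a - 1) * 3 ^ (b - 1))) + 1 := by nlinarith [hx, hy]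

theorem bound_for_odd_composite (k m : ℕ) (hk : 2 < k) (hm : 1 < m)
    (hodd : Odd m) (hcomp : ¬ m.Prime) (h3 : ¬ (3 ∣ m)) (hH : H m = k) :
    m < 2 * 3 ^ (k - 2) + 1 := by
  have hmo : ¬ Even m := Nat.not_even_iff_odd.mpr hodd
  set p := m.minFac with hp
  have hpp : p.Prime := Nat.minFac_prime (by omega)
  have hpd : p ∣ m := Nat.minFac_dvd m
  have hp2 : p ≠ 2 := fun h => hmo (even_iff_two_dvd.mpr (h ▸ hpd))
  have hp3 : p ≠ 3 := fun h => h3 (h ▸ hpd)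
  have hgp : 2 ≤ g p := g_prime_two_le hpp hp2 hp3
  have hbp : p ≤ 2 * 3 ^ (g p - 1) + 1 := prime_bound hpp hp2
  obtain ⟨s, hs⟩ := hpd
  have hs1 : 1 < s := by
    rcases Nat.lt_or_ge 1 s with h | h
    · exact h
    · interval_cases s
      · omega
      · rw [Nat.mul_one] at hs
        exact absurd (hs ▸ hpp) hcomp
  have hso : ¬ Even s := fun he => hmo (hs ▸ (he.mul_left p))
  have h3s : ¬ 3 ∣ s := fun hd => h3 (hs ▸ (hd.mul_left p))
  obtain ⟨hgs, hbs⟩ := odd_coprime3_bound s hs1 hso h3s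
  have hgm : g m = g p + g s := hs ▸ g_mul hpp.pos.ne' (by omega)
  have hHg : H m = g m + 1 := H_odd_eq_g (by omega) hmo
  have hgmk : g m = k - 1 := by omega
  set a := g p
  set b := g s
  have hx : (3:ℕ) ≤ 3 ^ (a - 1) := by
    calc (3:ℕ) = 3 ^ 1 := by norm_num
    _ ≤ 3 ^ (a - 1) := Nat.pow_le_pow_right (by norm_num) (by omega)
  have hy : (3:ℕ) ≤ 3 ^ (b - 1) := by
    calc (3:ℕ) = 3 ^ 1 := by norm_num
    _ ≤ 3 ^ (b - 1) := Nat.pow_le_pow_right (by norm_num) (by omega)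
  have hpow : (3:ℕ) ^ (k - 2) = 3 * (3 ^ (a - 1) * 3 ^ (b - 1)) := by
    rw [← pow_add, ← pow_succ']
    congr 1
    omega
  rw [hpow]
  have : m ≤ 2 * (3 * (3 ^ (a - 1) * 3 ^ (b - 1))) := by
    calc m = p * s := hs
      _ ≤ (2 * 3 ^ (a - 1) + 1) * (2 * 3 ^ (b - 1) + 1) := Nat.mul_le_mul hbp hbs
      _ ≤ 2 * (3 * (3 ^ (a - 1) * 3 ^ (b - 1))) := by nlinarith [hx, hy]
  omega
end
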